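/- Σ_{n=1}^∞ (−1)^{n−1} / (n · 3^n · C(4n,2n)) = −√3·π/21 + (2/7)·ln 3. -/

import Mathlib

open Real



lemma nat_prod_fact (a b : ℕ) :
    a.factorial * ∏ j ∈ Finset.range (b+1), (a+1+j) = (a+b+1).factorial := by
  induction b with
  | zero => simp [Nat.factorial_succ, Nat.mul_comm]
  | succ b ih =>
      have e : (a+b+1+1).factorial = (a+b+1+1) * (a+b+1).factorial :=
        Nat.factorial_succ _
      rw [Finset.prod_range_succ, ← mul_assoc, ih,
        show a + (b+1) + 1 = a+b+1+1 from by omega, e]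
      ring

lemma beta_real (a b : ℕ) :
    ∫ x in (0:ℝ)..1, x^a * (1-x)^b
      = (a.factorial * b.factorial : ℝ) / ((a+b+1).factorial) := by
  have h := Complex.betaIntegral_eval_nat_add_one_right
      (u := (a:ℂ)+1) (by simp; positivity) b
  rw [Complex.betaIntegral] at h
  have hint : (∫ x in (0:ℝ)..1, (x:ℂ)^(((a:ℂ)+1)-1) * ((1:ℂ)-x)^(((b:ℂ)+1)-1))
      = ((∫ x in (0:ℝ)..1, x^a * (1-x)^b : ℝ) : ℂ) := by
    rw [← intervalIntegral.integral_ofReal]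
    apply intervalIntegral.integral_congr
    intro x _
    push_cast
    rw [add_sub_cancel_right, add_sub_cancel_right, Complex.cpow_natCast,
      Complex.cpow_natCast]
  rw [hint] at h
  have hprod : (∏ j ∈ Finset.range (b+1), (((a:ℂ)+1) + j))
      = ((∏ j ∈ Finset.range (b+1), (a+1+j) : ℕ) : ℂ) := by
    push_cast; ring_nf
  rw [hprod] at h
  have key := nat_prod_fact a b
  have h2 : ((∫ x in (0:ℝ)..1, x^a * (1-x)^b : ℝ) : ℂ)
      = ((a.factorial : ℝ) * (b.factorial : ℝ) / (((a+b+1).factorial : ℕ) : ℝ) : ℝ) := by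
    rw [h, Complex.ofReal_div, Complex.ofReal_mul, Complex.ofReal_natCast,
      Complex.ofReal_natCast, Complex.ofReal_natCast, ← key, Nat.cast_mul,
      mul_div_mul_left]
    exact_mod_cast Nat.factorial_ne_zero a
  exact_mod_cast h2



lemma term_eq (n : ℕ) :
    (-1 : ℝ) ^ n / (((n : ℝ) + 1) * 3 ^ (n + 1) * (Nat.choose (4 * (n + 1)) (2 * (n + 1)) : ℝ))
      = ∫ t in (0:ℝ)..1,
          (-1:ℝ)^n * (4*(n:ℝ)+5) / (((n:ℝ)+1) * 3^(n+1)) * (t*(1-t))^(2*n+2) := by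
  have hb : ∫ x in (0:ℝ)..1, (x*(1-x))^(2*n+2)
      = ((2*n+2).factorial * (2*n+2).factorial : ℝ)/((4*n+5).factorial) := by
    have h := beta_real (2*n+2) (2*n+2)
    rw [show 2*n+2 + (2*n+2) + 1 = 4*n+5 from by omega] at h
    rw [← h]
    apply intervalIntegral.integral_congr
    intro x _
    simp [mul_pow]
  rw [intervalIntegral.integral_const_mul, hb]
  have hC : (Nat.choose (4*(n+1)) (2*(n+1)) : ℝ) * (((2*n+2).factorial : ℝ) * ((2*n+2).factorial : ℝ))
      = ((4*n+4).factorial : ℝ) := by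
    have := Nat.choose_mul_factorial_mul_factorial (show 2*(n+1) ≤ 4*(n+1) by omega)
    rw [show 4*(n+1) - 2*(n+1) = 2*n+2 from by omega, show 2*(n+1) = 2*n+2 from by omega] at this
    rw [show 4*(n+1) = 4*n+4 from by omega] at this
    push_cast [← this]
    ring
  have hfac : ((4*n+5).factorial : ℝ) = (4*(n:ℝ)+5) * ((4*n+4).factorial : ℝ) := by
    rw [show 4*n+5 = (4*n+4)+1 from by omega, Nat.factorial_succ]
    push_cast; ring
  have h1 : ((n:ℝ)+1) ≠ 0 := by positivity
  have h2 : (3:ℝ)^(n+1) ≠ 0 := by positivity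
  have h3 : (Nat.choose (4*(n+1)) (2*(n+1)) : ℝ) ≠ 0 := by
    exact_mod_cast (Nat.choose_pos (by omega)).ne'
  have h4 : ((2*n+2).factorial : ℝ) ≠ 0 := by
    exact_mod_cast (Nat.factorial_pos _).ne'
  have h5 : (4*(n:ℝ)+5) ≠ 0 := by positivity
  have h6 : ((4*n+4).factorial : ℝ) ≠ 0 := by
    exact_mod_cast (Nat.factorial_pos _).ne'
  rw [hfac]
  field_simp
  linear_combination (-1:ℝ) * hC


lemma hasSum_g {s : ℝ} (hs : |s| ≤ 1/2) :
    HasSum (fun n : ℕ => (-1:ℝ)^n * (4*(n:ℝ)+5) / (((n:ℝ)+1) * 3^(n+1)) * s^(2*n+2))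
      (4*(s^2/3)/(1+s^2/3) + Real.log (1+s^2/3)) := by
  set c : ℝ := -(s^2/3) with hc
  have habs : |c| < 1 := by
    rw [hc, abs_neg, abs_div, abs_of_nonneg (sq_nonneg s)]
    have : s^2 ≤ 1/4 := by nlinarith [abs_nonneg s, sq_abs s]
    rw [abs_of_pos (by norm_num : (0:ℝ) < 3)]
    linarith
  have h1 : HasSum (fun n : ℕ => c^(n+1)/((n:ℝ)+1)) (-Real.log (1-c)) := by
    have := Real.hasSum_pow_div_log_of_abs_lt_one habs
    simpa using this
  have h2 : HasSum (fun n : ℕ => (-4*c) * c^n) (-4*c * (1-c)⁻¹) :=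
    (hasSum_geometric_of_abs_lt_one habs).mul_left _
  have h3 := h2.add (h1.mul_left (-1))
  have key : ∀ n : ℕ, (-1:ℝ)^n * (4*(n:ℝ)+5) / (((n:ℝ)+1) * 3^(n+1)) * s^(2*n+2)
      = (-4*c) * c^n + (-1) * (c^(n+1)/((n:ℝ)+1)) := by
    intro n
    have hcp : c^(n+1) = -((-1:ℝ)^n * (s^2)^(n+1) / 3^(n+1)) := by
      rw [hc, neg_pow, pow_succ]
      ring_nf
      simp only [one_div, inv_pow]
      ring
    have hsp : s^(2*n+2) = (s^2)^(n+1) := by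
      rw [← pow_mul]; ring_nf
    have hne : ((n:ℝ)+1) ≠ 0 := by positivity
    rw [show (-4*c) * c^n = -4 * c^(n+1) from by ring, hcp, hsp]
    field_simp
    ring
  have hval : -4*c*(1-c)⁻¹ + -1*(-Real.log (1-c))
      = 4*(s^2/3)/(1+s^2/3) + Real.log (1+s^2/3) := by
    rw [hc]
    have : (1:ℝ) - -(s^2/3) = 1 + s^2/3 := by ring
    rw [this]
    ring
  rw [← hval]
  exact (funext key : _) ▸ h3


noncomputable def Fa (t : ℝ) : ℝ :=
  -t*Real.log 3 + (t-9/14)*Real.log (t^2-3*t+3) + (t-5/14)*Real.log (t^2+t+1)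
    - (Real.sqrt 3/7)*(Real.arctan ((2*t-3)/Real.sqrt 3)
        + Real.arctan ((2*t+1)/Real.sqrt 3))

noncomputable def ga (t : ℝ) : ℝ :=
  4*((t*(1-t))^2/3)/(1+(t*(1-t))^2/3) + Real.log (1+(t*(1-t))^2/3)

lemma P2_pos (t : ℝ) : 0 < t^2-3*t+3 := by nlinarith [sq_nonneg (t - 3/2)]
lemma P1_pos (t : ℝ) : 0 < t^2+t+1 := by nlinarith [sq_nonneg (t + 1/2)]

lemma hasDerivAt_Fa (t : ℝ) : HasDerivAt Fa (ga t) t := by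
  have s3 : Real.sqrt 3 > 0 := Real.sqrt_pos.mpr (by norm_num)
  have s3sq : Real.sqrt 3 ^ 2 = 3 := Real.sq_sqrt (by norm_num)
  have h2 := P2_pos t
  have h1 := P1_pos t
  -- derivatives of inner polys
  have d2 : HasDerivAt (fun t : ℝ => t^2-3*t+3) (2*t-3) t := by
    have := ((hasDerivAt_pow 2 t).sub ((hasDerivAt_id t).const_mul 3)).add_const 3
    simpa using this
  have d1 : HasDerivAt (fun t : ℝ => t^2+t+1) (2*t+1) t := by
    have := ((hasDerivAt_pow 2 t).add (hasDerivAt_id t)).add_const 1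
    simpa using this
  have dl2 : HasDerivAt (fun t : ℝ => Real.log (t^2-3*t+3)) ((2*t-3)/(t^2-3*t+3)) t := by
    simpa [div_eq_mul_inv, mul_comm, Function.comp_def] using (Real.hasDerivAt_log h2.ne').comp t d2
  have dl1 : HasDerivAt (fun t : ℝ => Real.log (t^2+t+1)) ((2*t+1)/(t^2+t+1)) t := by
    simpa [div_eq_mul_inv, mul_comm, Function.comp_def] using (Real.hasDerivAt_log h1.ne').comp t d1
  have da2 : HasDerivAt (fun t : ℝ => Real.arctan ((2*t-3)/Real.sqrt 3))
      ((1/(1+((2*t-3)/Real.sqrt 3)^2)) * (2/Real.sqrt 3)) t := by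
    have dlin : HasDerivAt (fun t : ℝ => (2*t-3)/Real.sqrt 3) (2/Real.sqrt 3) t := by
      have := (((hasDerivAt_id t).const_mul 2).sub_const 3).div_const (Real.sqrt 3)
      simpa [mul_comm] using this
    exact (Real.hasDerivAt_arctan _).comp t dlin
  have da1 : HasDerivAt (fun t : ℝ => Real.arctan ((2*t+1)/Real.sqrt 3))
      ((1/(1+((2*t+1)/Real.sqrt 3)^2)) * (2/Real.sqrt 3)) t := by
    have dlin : HasDerivAt (fun t : ℝ => (2*t+1)/Real.sqrt 3) (2/Real.sqrt 3) t := by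
      have := (((hasDerivAt_id t).const_mul 2).add_const 1).div_const (Real.sqrt 3)
      simpa [mul_comm] using this
    exact (Real.hasDerivAt_arctan _).comp t dlin
  have big : HasDerivAt Fa
      ((-1)*Real.log 3
        + ((1*Real.log (t^2-3*t+3)) + (t-9/14)*((2*t-3)/(t^2-3*t+3)))
        + ((1*Real.log (t^2+t+1)) + (t-5/14)*((2*t+1)/(t^2+t+1)))
        - (Real.sqrt 3/7)*(((1/(1+((2*t-3)/Real.sqrt 3)^2)) * (2/Real.sqrt 3))
            + ((1/(1+((2*t+1)/Real.sqrt 3)^2)) * (2/Real.sqrt 3)))) t := by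
    unfold Fa
    have dA : HasDerivAt (fun t : ℝ => -t*Real.log 3) ((-1)*Real.log 3) t := by
      simpa using ((hasDerivAt_id t).neg.mul_const (Real.log 3))
    have dB := ((hasDerivAt_id t).sub_const (9/14)).mul dl2
    have dC := ((hasDerivAt_id t).sub_const (5/14)).mul dl1
    have dD := ((da2.add da1).const_mul (Real.sqrt 3/7))
    simpa [Pi.add_def, Pi.sub_def] using ((dA.add (by simpa [Pi.mul_def] using dB)).add (by simpa [Pi.mul_def] using dC)).sub dD
  convert big using 1
  -- now algebraic identity
  have e2 : 1+((2*t-3)/Real.sqrt 3)^2 = (4/3)*(t^2-3*t+3) := by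
    rw [div_pow, s3sq]; ring
  have e1 : 1+((2*t+1)/Real.sqrt 3)^2 = (4/3)*(t^2+t+1) := by
    rw [div_pow, s3sq]; ring
  have hlog : Real.log (1+(t*(1-t))^2/3)
      = Real.log (t^2-3*t+3) + Real.log (t^2+t+1) - Real.log 3 := by
    have hfac : 1+(t*(1-t))^2/3 = (t^2-3*t+3)*(t^2+t+1)/3 := by ring
    rw [hfac, Real.log_div (by positivity) (by norm_num),
      Real.log_mul h2.ne' h1.ne']
  unfold ga
  rw [hlog, e2, e1]
  have hu : 1+(t*(1-t))^2/3 = (t^2-3*t+3)*(t^2+t+1)/3 := by ring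
  rw [hu]
  have h2' : t*(t-3)+3 ≠ 0 := by nlinarith
  have h1' : t*(t+1)+1 ≠ 0 := by nlinarith
  field_simp
  ring

lemma cont_ga : Continuous ga := by
  have hu : Continuous fun t : ℝ => 1+(t*(1-t))^2/3 := by fun_prop
  have hne : ∀ t : ℝ, 1+(t*(1-t))^2/3 ≠ 0 := fun t => by positivity
  have hnum : Continuous fun t : ℝ => 4*((t*(1-t))^2/3) := by fun_prop
  exact (hnum.div hu hne).add (hu.log hne)

lemma arctan_sqrt3 : Real.arctan (Real.sqrt 3) = π/3 := by
  rw [← Real.tan_pi_div_three]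
  exact Real.arctan_tan (by linarith [pi_pos]) (by linarith [pi_pos])

lemma arctan_inv_sqrt3 : Real.arctan (1/Real.sqrt 3) = π/6 := by
  rw [← Real.tan_pi_div_six]
  exact Real.arctan_tan (by linarith [pi_pos]) (by linarith [pi_pos])

lemma integral_ga :
    ∫ t in (0:ℝ)..1, ga t = -Real.sqrt 3 * π/21 + (2/7)*Real.log 3 := by
  rw [intervalIntegral.integral_eq_sub_of_hasDerivAt
      (fun t _ => hasDerivAt_Fa t) (cont_ga.intervalIntegrable 0 1)]
  have s3 : (0:ℝ) < Real.sqrt 3 := Real.sqrt_pos.mpr (by norm_num)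
  have h31 : (2*(1:ℝ)-3)/Real.sqrt 3 = -(1/Real.sqrt 3) := by ring
  have h32 : (2*(1:ℝ)+1)/Real.sqrt 3 = Real.sqrt 3 := by
    rw [show (2*(1:ℝ)+1) = 3 by norm_num]
    exact Real.div_sqrt
  have h01 : (2*(0:ℝ)-3)/Real.sqrt 3 = -(Real.sqrt 3) := by
    rw [show (2*(0:ℝ)-3) = -3 by norm_num, neg_div]
    rw [Real.div_sqrt]
  have h02 : (2*(0:ℝ)+1)/Real.sqrt 3 = 1/Real.sqrt 3 := by norm_num
  unfold Fa
  rw [h31, h32, h01, h02, Real.arctan_neg, Real.arctan_neg, arctan_sqrt3,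
    arctan_inv_sqrt3]
  norm_num [Real.log_one]
  ring



lemma key_hasSum : HasSum
    (fun n : ℕ => ∫ t in (0:ℝ)..1,
      (-1:ℝ)^n * (4*(n:ℝ)+5) / (((n:ℝ)+1) * 3^(n+1)) * (t*(1-t))^(2*n+2))
    (∫ t in (0:ℝ)..1, ga t) := by
  apply intervalIntegral.hasSum_integral_of_dominated_convergence
    (bound := fun (n : ℕ) (_ : ℝ) => 5*(1/48:ℝ)^(n+1))
  · intro n
    apply Continuous.aestronglyMeasurable
    fun_prop
  · intro n
    filter_upwards with t ht
    have ht' : 0 < t ∧ t ≤ 1 := by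
      rcases Set.mem_uIoc.mp ht with h | h
      · exact ⟨h.1, h.2⟩
      · exact absurd (h.1.trans_le h.2) (by norm_num)
    have h0 : 0 ≤ t*(1-t) := by nlinarith [ht'.1, ht'.2]
    have h14 : t*(1-t) ≤ 1/4 := by nlinarith [sq_nonneg (t-1/2)]
    have habs : ‖(-1:ℝ)^n * (4*(n:ℝ)+5) / (((n:ℝ)+1) * 3^(n+1)) * (t*(1-t))^(2*n+2)‖
        = (4*(n:ℝ)+5) / (((n:ℝ)+1) * 3^(n+1)) * (t*(1-t))^(2*n+2) := by
      simp only [Real.norm_eq_abs, abs_mul, abs_div, abs_pow, abs_neg, abs_one,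
        one_pow, one_mul]
      rw [← abs_mul, abs_of_nonneg h0, abs_of_nonneg (by positivity : (0:ℝ) ≤ 4*(n:ℝ)+5),
        abs_of_nonneg (by positivity : (0:ℝ) ≤ (n:ℝ)+1),
        abs_of_nonneg (by norm_num : (0:ℝ) ≤ (3:ℝ))]
    rw [habs]
    have hp : (t*(1-t))^(2*n+2) ≤ (1/16:ℝ)^(n+1) := by
      rw [show (1/16:ℝ) = (1/4)^2 by norm_num, ← pow_mul,
        show 2*(n+1) = 2*n+2 by ring]
      exact pow_le_pow_left₀ h0 h14 _
    have hc : (4*(n:ℝ)+5) / (((n:ℝ)+1) * 3^(n+1)) ≤ 5/(3:ℝ)^(n+1) := by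
      rw [div_le_div_iff₀ (by positivity) (by positivity)]
      have hn : (0:ℝ) ≤ (n:ℝ) := Nat.cast_nonneg n
      nlinarith [pow_pos (show (0:ℝ) < 3 by norm_num) (n+1)]
    calc (4*(n:ℝ)+5) / (((n:ℝ)+1) * 3^(n+1)) * (t*(1-t))^(2*n+2)
        ≤ (5/(3:ℝ)^(n+1)) * (1/16:ℝ)^(n+1) := by
          apply mul_le_mul hc hp (by positivity) (by positivity)
      _ = 5*(1/48:ℝ)^(n+1) := by
          rw [show (1/48:ℝ) = (1/3)*(1/16) by norm_num, mul_pow, div_pow,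
            one_pow]
          field_simp
          rw [← mul_pow]; norm_num
  · filter_upwards with t _
    apply Summable.mul_left
    exact (summable_geometric_of_lt_one (by norm_num) (by norm_num)).comp_injective
      (add_left_injective 1)
  · exact intervalIntegrable_const
  · filter_upwards with t ht
    have ht' : 0 < t ∧ t ≤ 1 := by
      rcases Set.mem_uIoc.mp ht with h | h
      · exact ⟨h.1, h.2⟩
      · exact absurd (h.1.trans_le h.2) (by norm_num)
    have h0 : 0 ≤ t*(1-t) := by nlinarith [ht'.1, ht'.2]
    have h14 : t*(1-t) ≤ 1/4 := by nlinarith [sq_nonneg (t-1/2)]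
    show HasSum _ (4*((t*(1-t))^2/3)/(1+(t*(1-t))^2/3) + Real.log (1+(t*(1-t))^2/3))
    exact hasSum_g (by rw [abs_of_nonneg h0]; linarith)


theorem stmt_7 :
    ∑' n : ℕ, (-1 : ℝ) ^ n /
      (((n : ℝ) + 1) * 3 ^ (n + 1) * (Nat.choose (4 * (n + 1)) (2 * (n + 1)) : ℝ)) =
    -Real.sqrt 3 * Real.pi / 21 + (2 / 7) * Real.log 3 := by
  calc ∑' n : ℕ, (-1 : ℝ) ^ n /
      (((n : ℝ) + 1) * 3 ^ (n + 1) * (Nat.choose (4 * (n + 1)) (2 * (n + 1)) : ℝ))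
      = ∑' n : ℕ, ∫ t in (0:ℝ)..1,
          (-1:ℝ)^n * (4*(n:ℝ)+5) / (((n:ℝ)+1) * 3^(n+1)) * (t*(1-t))^(2*n+2) :=
        tsum_congr term_eq
    _ = ∫ t in (0:ℝ)..1, ga t := key_hasSum.tsum_eq
    _ = -Real.sqrt 3 * Real.pi / 21 + (2 / 7) * Real.log 3 := integral_ga
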